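/- Consider the pricing game with seller costs: each seller i has cost c_i ≥ 0 and utility (p_i - c_i)·1{i ∈ X(p)}. For any monotone v, cost vector c, up-consistent decision map X, and ε > 0, there exists an ε-Nash equilibrium p with X(p) = X(c). -/

import Mathlib

/-- In the pricing game with seller costs `c` and an up-consistent
decision map `X`, for every `ε > 0` there exists an `ε`-Nash equilibrium `p`
with `X p = X c`. -/
theorem stmt13 {n : ℕ} (v : Finset (Fin n) → ℝ)
    (hmono : ∀ S T : Finset (Fin n), S ⊆ T → v S ≤ v T)
    (hv0 : v ∅ = 0)
    (c : Fin n → ℝ) (hc : ∀ i, 0 ≤ c i)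
    (X : (Fin n → ℝ) → Finset (Fin n))
    (hXd : ∀ q : Fin n → ℝ, (∀ i, 0 ≤ q i) → ∀ T : Finset (Fin n),
      v T - ∑ i ∈ T, q i ≤ v (X q) - ∑ i ∈ X q, q i)
    (hXup : ∀ q : Fin n → ℝ, (∀ i, 0 ≤ q i) → ∀ i ∈ X q, ∀ q' : ℝ, q i < q' →
      X (Function.update q i q') = X q ∨ i ∉ X (Function.update q i q'))
    (ε : ℝ) (hε : 0 < ε) :
    ∃ p : Fin n → ℝ, (∀ i, 0 ≤ p i) ∧ X p = X c ∧
      ∀ i : Fin n, ∀ q : ℝ, 0 ≤ q →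
        (if i ∈ X (Function.update p i q) then q - c i else 0) ≤
        (if i ∈ X p then p i - c i else 0) + ε := by
  classical
  set S₀ := X c with hS₀
  set Good : (Fin n → ℝ) → Prop := fun p =>
    (∀ i, c i ≤ p i) ∧ (∀ j, j ∉ S₀ → p j = c j) ∧ X p = S₀ with hGood
  have hGoodc : Good c := ⟨fun i => le_refl _, fun _ _ => rfl, rfl⟩
  have hnn : ∀ p, Good p → ∀ i, 0 ≤ p i := fun p hp i => (hc i).trans (hp.1 i)
  -- the total selected price is bounded by v S₀
  have hbound : ∀ p, Good p → ∑ i ∈ S₀, p i ≤ v S₀ := by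
    intro p hp
    have h := hXd p (hnn p hp) ∅
    rw [hp.2.2] at h
    simp [hv0] at h
    linarith
  -- one raising step
  have hstep : ∀ p, Good p → ∀ i ∈ S₀,
      X (Function.update p i (p i + ε)) = S₀ →
      Good (Function.update p i (p i + ε)) ∧
        ∑ j ∈ S₀, Function.update p i (p i + ε) j = (∑ j ∈ S₀, p j) + ε := by
    intro p hp i hi hX'
    refine ⟨⟨?_, ?_, hX'⟩, ?_⟩
    · intro j
      rcases eq_or_ne j i with rfl | hj
      · rw [Function.update_self]; linarith [hp.1 j]
      · rw [Function.update_of_ne hj]; exact hp.1 j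
    · intro j hj
      have hj' : j ≠ i := fun h => hj (h ▸ hi)
      rw [Function.update_of_ne hj']; exact hp.2.1 j hj
    · rw [Finset.sum_update_of_mem hi, Finset.sum_eq_add_sum_sdiff_singleton_of_mem hi p]
      ring
  -- iterate: either reach a terminal point or grow the sum indefinitely
  have key : ∀ k : ℕ,
      (∃ p, Good p ∧ ∀ i ∈ S₀, i ∉ X (Function.update p i (p i + ε))) ∨
      (∃ p, Good p ∧ (∑ j ∈ S₀, c j) + k * ε ≤ ∑ j ∈ S₀, p j) := by
    intro k
    induction k with
    | zero => exact Or.inr ⟨c, hGoodc, by simp⟩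
    | succ k ih =>
      rcases ih with h | ⟨p, hp, hsum⟩
      · exact Or.inl h
      · by_cases hterm : ∀ i ∈ S₀, i ∉ X (Function.update p i (p i + ε))
        · exact Or.inl ⟨p, hp, hterm⟩
        · push_neg at hterm
          obtain ⟨i, hi, hmem⟩ := hterm
          have hup := hXup p (hnn p hp) i (by rw [hp.2.2]; exact hi) (p i + ε)
            (by linarith)
          have hX' : X (Function.update p i (p i + ε)) = S₀ := by
            rcases hup with h | h
            · rw [h, hp.2.2]
            · exact absurd hmem h
          obtain ⟨hg, hs⟩ := hstep p hp i hi hX'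
          refine Or.inr ⟨_, hg, ?_⟩
          rw [hs]
          push_cast
          linarith
  -- choose k large enough to rule out the second alternative
  obtain ⟨k, hk⟩ := exists_nat_gt ((v S₀ - ∑ j ∈ S₀, c j) / ε)
  have hterm : ∃ p, Good p ∧ ∀ i ∈ S₀, i ∉ X (Function.update p i (p i + ε)) := by
    rcases key k with h | ⟨p, hp, hsum⟩
    · exact h
    · exfalso
      have h1 := hbound p hp
      have h2 : (v S₀ - ∑ j ∈ S₀, c j) < k * ε := by
        rw [div_lt_iff₀ hε] at hk
        linarith
      linarith
  obtain ⟨p, hp, hpt⟩ := hterm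
  refine ⟨p, hnn p hp, hp.2.2, ?_⟩
  intro i q hq
  have hnnq : ∀ j, 0 ≤ Function.update p i q j := by
    intro j
    rcases eq_or_ne j i with rfl | hj
    · rwa [Function.update_self]
    · rw [Function.update_of_ne hj]; exact hnn p hp j
  by_cases hiS : i ∈ S₀
  · -- selected seller
    rw [hp.2.2]
    simp only [hiS, if_true]
    by_cases hiq : i ∈ X (Function.update p i q)
    · simp only [hiq, if_true]
      -- show q ≤ p i + ε
      have hie : i ∉ X (Function.update p i (p i + ε)) := hpt i hiS
      set p'' := Function.update p i (p i + ε) with hp''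
      set p' := Function.update p i q with hp'
      have hnn'' : ∀ j, 0 ≤ p'' j := by
        intro j
        rcases eq_or_ne j i with rfl | hj
        · rw [hp'', Function.update_self]; have := hnn p hp j; linarith
        · rw [hp'', Function.update_of_ne hj]; exact hnn p hp j
      have h1 := hXd p'' hnn'' (X p')
      have h2 := hXd p' hnnq (X p'')
      have e1 : ∑ j ∈ X p', p'' j = (p i + ε) + ∑ j ∈ X p' \ {i}, p j := by
        rw [hp'', Finset.sum_update_of_mem hiq]
      have e2 : ∑ j ∈ X p', p' j = q + ∑ j ∈ X p' \ {i}, p j := by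
        rw [hp', Finset.sum_update_of_mem hiq]
      have e3 : ∑ j ∈ X p'', p'' j = ∑ j ∈ X p'', p j := by
        rw [hp'', Finset.sum_update_of_notMem hie]
      have e4 : ∑ j ∈ X p'', p' j = ∑ j ∈ X p'', p j := by
        rw [hp', Finset.sum_update_of_notMem hie]
      have hqle : q ≤ p i + ε := by
        rw [e1, e3] at h1
        rw [e2, e4] at h2
        linarith
      linarith
    · simp only [hiq, if_false]
      have := hp.1 i
      linarith
  · -- non-selected seller
    rw [hp.2.2]
    simp only [hiS, if_false]
    by_cases hiq : i ∈ X (Function.update p i q)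
    · simp only [hiq, if_true]
      set p' := Function.update p i q with hp'
      have h1 := hXd p' hnnq S₀
      have h2 := hXd p (hnn p hp) (X p')
      rw [hp.2.2] at h2
      have e1 : ∑ j ∈ S₀, p' j = ∑ j ∈ S₀, p j := by
        rw [hp', Finset.sum_update_of_notMem hiS]
      have e2 : ∑ j ∈ X p', p' j = q + ∑ j ∈ X p' \ {i}, p j := by
        rw [hp', Finset.sum_update_of_mem hiq]
      have e3 : ∑ j ∈ X p', p j = p i + ∑ j ∈ X p' \ {i}, p j :=
        Finset.sum_eq_add_sum_sdiff_singleton_of_mem hiq p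
      have hqle : q ≤ p i := by
        rw [e1, e2] at h1
        rw [e3] at h2
        linarith
      have hpc : p i = c i := hp.2.1 i hiS
      linarith
    · simp only [hiq, if_false]
      linarith
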